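/- Let K be a field of characteristic zero and V a finite-dimensional K-vector space. Let B and B' be alternating bilinear forms on V, both nonzero, such that the wedge product B∧B' vanishes identically as an alternating 4-linear form on V. Then there exists a subspace N ⊆ V with dim V − dim N ≤ 4 such that N is contained in the radical of B and in the radical of B'; equivalently, there is a quotient V → V' with dim V' ≤ 4 such that both B and B' are pulled back from bilinear forms on V'. -/

import Mathlib

/-- The wedge product of two alternating bilinear forms `B`, `B'` on `V`, as an
alternating 4-linear form: `(B∧B')(x₁,x₂,x₃,x₄) = B(x₁,x₂)B'(x₃,x₄) − B(x₁,x₃)B'(x₂,x₄)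
+ B(x₁,x₄)B'(x₂,x₃) + B'(x₁,x₂)B(x₃,x₄) − B'(x₁,x₃)B(x₂,x₄) + B'(x₁,x₄)B(x₂,x₃)`. -/
def wedgeProd {K V : Type*} [CommRing K] (B B' : V → V → K)
    (x₁ x₂ x₃ x₄ : V) : K :=
  B x₁ x₂ * B' x₃ x₄ - B x₁ x₃ * B' x₂ x₄ + B x₁ x₄ * B' x₂ x₃
    + B' x₁ x₂ * B x₃ x₄ - B' x₁ x₃ * B x₂ x₄ + B' x₁ x₄ * B x₂ x₃

section AuxWedge

variable {K V : Type*} [Field K] [CharZero K] [AddCommGroup V] [Module K V]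
  [FiniteDimensional K V]

private lemma bilin_exists_ne (B : LinearMap.BilinForm K V) (hB : B ≠ 0) :
    ∃ a b, B a b ≠ 0 := by
  by_contra h
  push_neg at h
  exact hB (LinearMap.ext fun a => LinearMap.ext fun b => by simpa using h a b)

private lemma codim4 (f₁ f₂ f₃ f₄ : V →ₗ[K] K) :
    Module.finrank K V - Module.finrank K
      ((LinearMap.ker f₁ ⊓ (LinearMap.ker f₂ ⊓ (LinearMap.ker f₃ ⊓ LinearMap.ker f₄)) :
        Submodule K V)) ≤ 4 := by
  have h1 := LinearMap.finrank_range_add_finrank_ker (f₁.prod (f₂.prod (f₃.prod f₄)))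
  have h2 : LinearMap.ker (f₁.prod (f₂.prod (f₃.prod f₄))) =
      LinearMap.ker f₁ ⊓ (LinearMap.ker f₂ ⊓ (LinearMap.ker f₃ ⊓ LinearMap.ker f₄)) := by
    simp [LinearMap.ker_prod]
  have h3 : Module.finrank K (LinearMap.range (f₁.prod (f₂.prod (f₃.prod f₄)))) ≤ 4 := by
    have h4 := Submodule.finrank_le (LinearMap.range (f₁.prod (f₂.prod (f₃.prod f₄))))
    have h5 : Module.finrank K (K × (K × (K × K))) = 4 := by
      simp [Module.finrank_prod, Module.finrank_self]
    omega
  rw [h2] at h1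
  omega

private lemma main_case (B B' : LinearMap.BilinForm K V)
    (hAltB : LinearMap.IsAlt B) (hAltB' : LinearMap.IsAlt B')
    (hB : B ≠ 0) (hB' : B' ≠ 0)
    (hw' : ∀ x₁ x₂ x₃ x₄ : V,
      B x₁ x₂ * B' x₃ x₄ - B x₁ x₃ * B' x₂ x₄ + B x₁ x₄ * B' x₂ x₃
        + B' x₁ x₂ * B x₃ x₄ - B' x₁ x₃ * B x₂ x₄ + B' x₁ x₄ * B x₂ x₃ = 0)
    (hnd : ¬ ∃ a b, B a b ≠ 0 ∧ ∀ x y, B a b * B x y = B a x * B b y - B a y * B b x) :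
    ∃ N : Submodule K V,
      Module.finrank K V - Module.finrank K N ≤ 4 ∧
      ∀ v ∈ N, ∀ w : V, B v w = 0 ∧ B' v w = 0 := by
  -- Step 1: the radical of B is contained in the radical of B'
  have rad : ∀ v, (∀ w, B v w = 0) → ∀ w, B' v w = 0 := by
    intro v hv w
    by_contra hd0
    apply hnd
    obtain ⟨a, b, hab⟩ := bilin_exists_ne B hB
    have star : ∀ x y, B' v w * B x y = B' v x * B w y - B' v y * B w x := by
      intro x y
      have h := hw' v w x y
      rw [hv w, hv x, hv y] at h
      linear_combination h
    have bval : ∀ x y, B x y = (B' v x * B w y - B' v y * B w x) / (B' v w) := by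
      intro x y
      field_simp
      linear_combination star x y
    refine ⟨a, b, hab, fun x y => ?_⟩
    rw [bval a b, bval x y, bval a x, bval b y, bval a y, bval b x]
    field_simp
    ring
  by_cases hpq : ∃ p q, B p q = 0 ∧ B' p q ≠ 0
  · obtain ⟨p, q, hBpq, hB'pq⟩ := hpq
    refine ⟨LinearMap.ker (B.flip p) ⊓ (LinearMap.ker (B.flip q) ⊓
      (LinearMap.ker (B'.flip p) ⊓ LinearMap.ker (B'.flip q))), codim4 _ _ _ _, ?_⟩
    intro v hv w
    simp only [Submodule.mem_inf, LinearMap.mem_ker, LinearMap.BilinForm.flip_apply] at hv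
    obtain ⟨h1, h2, h3, h4⟩ := hv
    have hBv : ∀ u, B v u = 0 := by
      intro u
      have h := hw' v u p q
      rw [h1, h2, h3, h4, hBpq] at h
      have h5 : B v u * B' p q = 0 := by linear_combination h
      exact (mul_eq_zero.mp h5).resolve_right hB'pq
    exact ⟨hBv w, rad v hBv w⟩
  · push_neg at hpq
    obtain ⟨a, b, hab⟩ := bilin_exists_ne B hB
    have claim1 : ∀ x y w, B x y ≠ 0 → B' x w * B x y = B' x y * B x w := by
      intro x y w hxy
      have hz : B x (B x y • w - B x w • y) = 0 := by
        simp only [map_sub, map_smul, smul_eq_mul]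
        ring
      have h := hpq x _ hz
      simp only [map_sub, map_smul, smul_eq_mul] at h
      linear_combination h
    have hba : B b a ≠ 0 := by
      rw [← hAltB.neg a b]
      simpa using hab
    have A1 : ∀ w, B' a w * B a b = B' a b * B a w := fun w => claim1 a b w hab
    have A2 : ∀ w, B' b w * B a b = B' a b * B b w := by
      intro w
      have h := claim1 b a w hba
      have e1 : B b a = -B a b := by rw [← hAltB.neg a b]
      have e2 : B' b a = -B' a b := by rw [← hAltB'.neg a b]
      rw [e1, e2] at h
      linear_combination -h
    have dd : ∀ x y, B a b * (B a b * B' x y) =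
        2 * B' a b * (B a x * B b y - B a y * B b x) - B' a b * (B a b * B x y) := by
      intro x y
      have h := hw' a b x y
      linear_combination B a b * h + B a x * A2 y - B a y * A2 x + B b y * A1 x - B b x * A1 y
    have hμ : B' a b ≠ 0 := by
      intro h0
      apply hB'
      refine LinearMap.ext fun x => LinearMap.ext fun y => ?_
      have h := dd x y
      rw [h0] at h
      simp only [LinearMap.zero_apply]
      have h2 : B a b * (B a b * B' x y) = 0 := by linear_combination h
      rcases mul_eq_zero.mp h2 with h3 | h3
      · exact absurd h3 hab
      · rcases mul_eq_zero.mp h3 with h4 | h4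
        · exact absurd h4 hab
        · exact h4
    have orth : ∀ x y, B a x = 0 → B b x = 0 → B a y = 0 → B b y = 0 → B x y = 0 := by
      intro x y hax hbx hay hby
      by_contra hxy
      have hxb : B x b = 0 := by rw [← hAltB.neg b x, hbx, neg_zero]
      have hBuz : B (x + a) ((-B a b / B x y) • y + b) = 0 := by
        simp only [map_add, map_smul, LinearMap.add_apply, LinearMap.smul_apply, smul_eq_mul,
          hxb, hay, hAltB.self_eq_zero, mul_zero, add_zero, zero_add]
        field_simp
        ring
      have hB'uz := hpq _ _ hBuz
      have h := dd (x + a) ((-B a b / B x y) • y + b)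
      rw [hB'uz, hBuz] at h
      have hau : B a (x + a) = 0 := by
        rw [map_add, hax, hAltB.self_eq_zero, add_zero]
      have hbu : B b (x + a) = -B a b := by
        rw [map_add, hbx, ← hAltB.neg a b, zero_add]
      have haz : B a ((-B a b / B x y) • y + b) = B a b := by
        rw [map_add, map_smul, hay, smul_zero, zero_add]
      have hbz : B b ((-B a b / B x y) • y + b) = 0 := by
        rw [map_add, map_smul, hby, smul_zero, hAltB.self_eq_zero, add_zero]
      rw [hau, hbu, haz, hbz] at h
      have h2 : 2 * B' a b * (B a b * B a b) = 0 := by linear_combination -h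
      have h3 := mul_ne_zero (mul_ne_zero (two_ne_zero (α := K)) hμ) (mul_ne_zero hab hab)
      exact h3 h2
    refine ⟨LinearMap.ker (B.flip a) ⊓ (LinearMap.ker (B.flip b) ⊓
      (LinearMap.ker (B.flip a) ⊓ LinearMap.ker (B.flip b))), codim4 _ _ _ _, ?_⟩
    intro v hv w
    simp only [Submodule.mem_inf, LinearMap.mem_ker, LinearMap.BilinForm.flip_apply] at hv
    obtain ⟨h1, h2, -⟩ := hv
    have hav : B a v = 0 := by rw [← hAltB.neg v a, h1, neg_zero]
    have hbv : B b v = 0 := by rw [← hAltB.neg v b, h2, neg_zero]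
    have hBvw : B v w = 0 := by
      have haw' : B a (w + (B b w / B a b) • a - (B a w / B a b) • b) = 0 := by
        simp only [map_add, map_sub, map_smul, LinearMap.add_apply, LinearMap.sub_apply,
          LinearMap.smul_apply, smul_eq_mul, hAltB.self_eq_zero]
        field_simp
        ring
      have hbw' : B b (w + (B b w / B a b) • a - (B a w / B a b) • b) = 0 := by
        simp only [map_add, map_sub, map_smul, LinearMap.add_apply, LinearMap.sub_apply,
          LinearMap.smul_apply, smul_eq_mul, hAltB.self_eq_zero]
        rw [← hAltB.neg a b]
        field_simp
        ring
      have h0 := orth v _ hav hbv haw' hbw'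
      simp only [map_add, map_sub, map_smul, smul_eq_mul, h1, h2] at h0
      linear_combination h0
    have hB'vw : B' v w = 0 := by
      have h := dd v w
      rw [hBvw, hav, hbv] at h
      have h2 : B a b * (B a b * B' v w) = 0 := by linear_combination h
      rcases mul_eq_zero.mp h2 with h3 | h3
      · exact absurd h3 hab
      · rcases mul_eq_zero.mp h3 with h4 | h4
        · exact absurd h4 hab
        · exact h4
    exact ⟨hBvw, hB'vw⟩

end AuxWedge

/-- Lemma 1.13 (lemmeutilesurproduit): if `B`, `B'` are nonzero alternating bilinear forms
on a finite-dimensional vector space `V` over a field of characteristic zero with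
`B∧B' = 0` as an alternating 4-linear form, then there is a subspace `N ⊆ V` of
codimension at most 4 contained in the radical of both `B` and `B'`. -/
theorem vanishing_wedge_common_radical
    {K V : Type*} [Field K] [CharZero K] [AddCommGroup V] [Module K V]
    [FiniteDimensional K V]
    (B B' : LinearMap.BilinForm K V)
    (hAltB : LinearMap.IsAlt B) (hAltB' : LinearMap.IsAlt B')
    (hB : B ≠ 0) (hB' : B' ≠ 0)
    (hw : ∀ x₁ x₂ x₃ x₄ : V,
      wedgeProd (fun u w => B u w) (fun u w => B' u w) x₁ x₂ x₃ x₄ = 0) :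
    ∃ N : Submodule K V,
      Module.finrank K V - Module.finrank K N ≤ 4 ∧
      ∀ v ∈ N, ∀ w : V, B v w = 0 ∧ B' v w = 0 := by
  have hw' : ∀ x₁ x₂ x₃ x₄ : V,
      B x₁ x₂ * B' x₃ x₄ - B x₁ x₃ * B' x₂ x₄ + B x₁ x₄ * B' x₂ x₃
        + B' x₁ x₂ * B x₃ x₄ - B' x₁ x₃ * B x₂ x₄ + B' x₁ x₄ * B x₂ x₃ = 0 := by
    intro x₁ x₂ x₃ x₄
    have h := hw x₁ x₂ x₃ x₄
    unfold wedgeProd at h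
    linear_combination h
  by_cases hd : ∃ a b, B a b ≠ 0 ∧ ∀ x y, B a b * B x y = B a x * B b y - B a y * B b x
  · by_cases hd' : ∃ p q, B' p q ≠ 0 ∧ ∀ x y, B' p q * B' x y = B' p x * B' q y - B' p y * B' q x
    · obtain ⟨a, b, hab, hidB⟩ := hd
      obtain ⟨p, q, hpq, hidB'⟩ := hd'
      refine ⟨LinearMap.ker (B.flip a) ⊓ (LinearMap.ker (B.flip b) ⊓
        (LinearMap.ker (B'.flip p) ⊓ LinearMap.ker (B'.flip q))), codim4 _ _ _ _, ?_⟩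
      intro v hv w
      simp only [Submodule.mem_inf, LinearMap.mem_ker, LinearMap.BilinForm.flip_apply] at hv
      obtain ⟨h1, h2, h3, h4⟩ := hv
      constructor
      · have hav : B a v = 0 := by rw [← hAltB.neg v a, h1, neg_zero]
        have hbv : B b v = 0 := by rw [← hAltB.neg v b, h2, neg_zero]
        have h := hidB v w
        rw [hav, hbv] at h
        simp only [zero_mul, mul_zero, sub_zero, zero_sub] at h
        -- h : B a b * B v w = 0
        rcases mul_eq_zero.mp (by linear_combination h : B a b * B v w = 0) with h5 | h5
        · exact absurd h5 hab
        · exact h5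
      · have hpv : B' p v = 0 := by rw [← hAltB'.neg v p, h3, neg_zero]
        have hqv : B' q v = 0 := by rw [← hAltB'.neg v q, h4, neg_zero]
        have h := hidB' v w
        rw [hpv, hqv] at h
        rcases mul_eq_zero.mp (by linear_combination h : B' p q * B' v w = 0) with h5 | h5
        · exact absurd h5 hpq
        · exact h5
    · have hw'' : ∀ x₁ x₂ x₃ x₄ : V,
          B' x₁ x₂ * B x₃ x₄ - B' x₁ x₃ * B x₂ x₄ + B' x₁ x₄ * B x₂ x₃
            + B x₁ x₂ * B' x₃ x₄ - B x₁ x₃ * B' x₂ x₄ + B x₁ x₄ * B' x₂ x₃ = 0 := by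
        intro x₁ x₂ x₃ x₄
        linear_combination hw' x₁ x₂ x₃ x₄
      obtain ⟨N, hN1, hN2⟩ := main_case B' B hAltB' hAltB hB' hB hw'' hd'
      exact ⟨N, hN1, fun v hv w => (hN2 v hv w).symm⟩
  · exact main_case B B' hAltB hAltB' hB hB' hw' hd
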